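/- Let c, A > 0 and γ ∈ (1,2), let ρ* > 0, define Q(ρ) := (c/(γ−1))(ρ^γ − γ(ρ*)^{γ−1}ρ + (γ−1)(ρ*)^γ) and G(ρ) := A∫_{ρ*}^{ρ} l^{(γ−4)/2} √(Q(l)) dl for ρ > 0. Then G(ρ) ≥ A√(c/(2(γ−1))) · (ρ^{γ−1} − ((2γ)^{1/(γ−1)}ρ*)^{γ−1})/(γ−1) for all ρ ≥ (2γ)^{1/(γ−1)}ρ*, and G(ρ) ≤ −(2A/(2−γ))√(c/2)(ρ*)^{γ/2}(ρ^{(γ−2)/2} − (((γ−1)/(2γ))ρ*)^{(γ−2)/2}) for all 0 < ρ < ((γ−1)/(2γ))ρ*. -/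

import Mathlib

open Real Set MeasureTheory

/-- **Ideal-gas bounds on `G` (Remark (ii) after Assumption (H)).**
For `Q(ρ) = (c/(γ−1))(ρ^γ − γ(ρ*)^{γ−1}ρ + (γ−1)(ρ*)^γ)` and
`G(ρ) = A ∫_{ρ*}^{ρ} l^{(γ−4)/2} √(Q(l)) dl` with `c, A > 0`, `γ ∈ (1,2)`, `ρ* > 0`:
`G(ρ) ≥ A √(c/(2(γ−1))) (ρ^{γ−1} − ((2γ)^{1/(γ−1)}ρ*)^{γ−1})/(γ−1)` for
`ρ ≥ (2γ)^{1/(γ−1)}ρ*`, and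
`G(ρ) ≤ −(2A/(2−γ)) √(c/2) (ρ*)^{γ/2} (ρ^{(γ−2)/2} − (((γ−1)/(2γ))ρ*)^{(γ−2)/2})` for
`0 < ρ < ((γ−1)/(2γ))ρ*`. -/
theorem ideal_gas_G_bounds
    (c A γ ρs : ℝ) (hc : 0 < c) (hA : 0 < A) (hγ : 1 < γ ∧ γ < 2) (hρs : 0 < ρs)
    (Q G : ℝ → ℝ)
    (hQ : ∀ x : ℝ, Q x = c / (γ - 1) *
      (x ^ γ - γ * ρs ^ (γ - 1) * x + (γ - 1) * ρs ^ γ))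
    (hG : ∀ x : ℝ, G x = A * ∫ l in ρs..x, l ^ ((γ - 4) / 2) * Real.sqrt (Q l)) :
    (∀ x : ℝ, (2 * γ) ^ (1 / (γ - 1)) * ρs ≤ x →
        A * Real.sqrt (c / (2 * (γ - 1))) *
          ((x ^ (γ - 1) - ((2 * γ) ^ (1 / (γ - 1)) * ρs) ^ (γ - 1)) / (γ - 1)) ≤ G x) ∧
    (∀ x : ℝ, 0 < x → x < (γ - 1) / (2 * γ) * ρs →
        G x ≤ -(2 * A / (2 - γ)) * Real.sqrt (c / 2) * ρs ^ (γ / 2) *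
          (x ^ ((γ - 2) / 2) - ((γ - 1) / (2 * γ) * ρs) ^ ((γ - 2) / 2))) := by
  obtain ⟨hγ1, hγ2⟩ := hγ
  have hγ1' : (0:ℝ) < γ - 1 := by linarith
  have h2γ : (1:ℝ) < 2 * γ := by linarith
  set ρ1 := (2 * γ) ^ (1 / (γ - 1)) * ρs with hρ1def
  set ρ0 := (γ - 1) / (2 * γ) * ρs with hρ0def
  have hρ1pos : 0 < ρ1 := mul_pos (Real.rpow_pos_of_pos (by linarith) _) hρs
  have hρ0pos : 0 < ρ0 := mul_pos (div_pos hγ1' (by linarith)) hρs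
  have hρsρ1 : ρs ≤ ρ1 := by
    nth_rewrite 1 [← one_mul ρs]
    exact mul_le_mul_of_nonneg_right (Real.one_le_rpow h2γ.le (by positivity)) hρs.le
  have hρ0ρs : ρ0 ≤ ρs := by
    rw [hρ0def]
    nth_rewrite 2 [← one_mul ρs]
    refine mul_le_mul_of_nonneg_right ?_ hρs.le
    rw [div_le_one (by linarith)]; linarith
  have hρ1pow : ρ1 ^ (γ - 1) = 2 * γ * ρs ^ (γ - 1) := by
    rw [hρ1def, Real.mul_rpow (by positivity) hρs.le, ← Real.rpow_mul (by linarith),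
      one_div, inv_mul_cancel₀ (ne_of_gt hγ1'), Real.rpow_one]
  -- nonnegativity of Q on positive reals
  have hQnn : ∀ l : ℝ, 0 < l → 0 ≤ Q l := by
    intro l hl
    rw [hQ]
    have key : (l ^ γ) ^ (1/γ) * (ρs ^ γ) ^ ((γ-1)/γ)
        ≤ (1/γ) * l ^ γ + ((γ-1)/γ) * ρs ^ γ :=
      Real.geom_mean_le_arith_mean2_weighted (by positivity) (by positivity)
        (by positivity) (by positivity) (by field_simp; ring)
    have h1 : (l ^ γ) ^ (1/γ) = l := by
      rw [← Real.rpow_mul hl.le, mul_one_div, div_self (by linarith), Real.rpow_one]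
    have h2 : (ρs ^ γ) ^ ((γ-1)/γ) = ρs ^ (γ - 1) := by
      rw [← Real.rpow_mul hρs.le, mul_div_assoc', mul_div_cancel_left₀ _ (by linarith)]
    rw [h1, h2] at key
    have heq : γ * ((1/γ) * l ^ γ + ((γ-1)/γ) * ρs ^ γ) = l ^ γ + (γ - 1) * ρs ^ γ := by
      field_simp
    have key2 : γ * (l * ρs ^ (γ - 1)) ≤ l ^ γ + (γ - 1) * ρs ^ γ := by
      rw [← heq]
      exact mul_le_mul_of_nonneg_left key (by linarith)
    have hin : 0 ≤ l ^ γ - γ * ρs ^ (γ - 1) * l + (γ - 1) * ρs ^ γ := by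
      nlinarith [key2]
    exact mul_nonneg (by positivity) hin
  -- integrability of the integrand on positive intervals
  have hInt : ∀ a b : ℝ, 0 < a → 0 < b →
      IntervalIntegrable (fun l => l ^ ((γ - 4) / 2) * Real.sqrt (Q l)) volume a b := by
    intro a b ha hb
    apply ContinuousOn.intervalIntegrable
    have hsub : Set.uIcc a b ⊆ Set.Ioi 0 := by
      intro t ht
      have := ht.1
      have hmin : 0 < min a b := lt_min ha hb
      exact lt_of_lt_of_le hmin this
    have h1 : ContinuousOn (fun l : ℝ => l ^ ((γ - 4) / 2)) (Set.uIcc a b) :=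
      fun t ht => (Real.continuousAt_rpow_const t _ (Or.inl (ne_of_gt (hsub ht)))).continuousWithinAt
    have hQ' : Q = fun x => c / (γ - 1) *
        (x ^ γ - γ * ρs ^ (γ - 1) * x + (γ - 1) * ρs ^ γ) := funext hQ
    have h2 : ContinuousOn Q (Set.uIcc a b) := by
      rw [hQ']
      apply ContinuousOn.mul continuousOn_const
      apply ContinuousOn.add (ContinuousOn.sub ?_ ?_) continuousOn_const
      · exact fun t ht =>
          (Real.continuousAt_rpow_const t _ (Or.inl (ne_of_gt (hsub ht)))).continuousWithinAt
      · exact (continuous_const.mul continuous_id).continuousOn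
    exact h1.mul (Real.continuous_sqrt.comp_continuousOn h2)
  have hnn : ∀ a b : ℝ, 0 < a → a ≤ b →
      0 ≤ ∫ l in a..b, l ^ ((γ - 4) / 2) * Real.sqrt (Q l) := by
    intro a b ha hab
    refine intervalIntegral.integral_nonneg hab (fun t ht => ?_)
    have htpos : 0 < t := lt_of_lt_of_le ha ht.1
    exact mul_nonneg (Real.rpow_nonneg htpos.le _) (Real.sqrt_nonneg _)
  constructor
  · -- lower bound for large ρ
    intro x hx
    rw [hG]
    have hxpos : 0 < x := lt_of_lt_of_le hρ1pos hx
    have hsplit : (∫ l in ρs..x, l ^ ((γ - 4) / 2) * Real.sqrt (Q l))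
        = (∫ l in ρs..ρ1, l ^ ((γ - 4) / 2) * Real.sqrt (Q l))
          + ∫ l in ρ1..x, l ^ ((γ - 4) / 2) * Real.sqrt (Q l) :=
      (intervalIntegral.integral_add_adjacent_intervals
        (hInt ρs ρ1 hρs hρ1pos) (hInt ρ1 x hρ1pos hxpos)).symm
    have h1 : 0 ≤ ∫ l in ρs..ρ1, l ^ ((γ - 4) / 2) * Real.sqrt (Q l) := hnn _ _ hρs hρsρ1
    have hptwise : ∀ t ∈ Set.Icc ρ1 x,
        Real.sqrt (c / (2 * (γ - 1))) * t ^ (γ - 2)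
          ≤ t ^ ((γ - 4) / 2) * Real.sqrt (Q t) := by
      intro t ht
      have htpos : 0 < t := lt_of_lt_of_le hρ1pos ht.1
      have hpow : 2 * γ * ρs ^ (γ - 1) ≤ t ^ (γ - 1) :=
        hρ1pow ▸ Real.rpow_le_rpow hρ1pos.le ht.1 (by linarith)
      have htγ : t ^ γ = t * t ^ (γ - 1) := by
        nth_rewrite 1 [show γ = 1 + (γ - 1) by ring]
        rw [Real.rpow_add htpos, Real.rpow_one]
      have hQge : c / (2 * (γ - 1)) * t ^ γ ≤ Q t := by
        rw [hQ]
        have hin : t ^ γ / 2 ≤ t ^ γ - γ * ρs ^ (γ - 1) * t + (γ - 1) * ρs ^ γ := by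
          have h4 := mul_le_mul_of_nonneg_left hpow htpos.le
          have h5 : 0 ≤ ρs ^ γ := Real.rpow_nonneg hρs.le _
          nlinarith [h4, htγ, h5]
        calc c / (2 * (γ - 1)) * t ^ γ = c / (γ - 1) * (t ^ γ / 2) := by
              field_simp
          _ ≤ c / (γ - 1) * (t ^ γ - γ * ρs ^ (γ - 1) * t + (γ - 1) * ρs ^ γ) :=
              mul_le_mul_of_nonneg_left hin (by positivity)
      have hsqrtpow : Real.sqrt (t ^ γ) = t ^ (γ / 2) := by
        rw [Real.sqrt_eq_rpow, ← Real.rpow_mul htpos.le, mul_one_div]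
      have hsq : Real.sqrt (c / (2 * (γ - 1))) * t ^ (γ / 2) ≤ Real.sqrt (Q t) := by
        have := Real.sqrt_le_sqrt hQge
        rwa [Real.sqrt_mul (by positivity), hsqrtpow] at this
      have hte : t ^ ((γ - 4) / 2) * t ^ (γ / 2) = t ^ (γ - 2) := by
        rw [← Real.rpow_add htpos]; congr 1; ring
      calc Real.sqrt (c / (2 * (γ - 1))) * t ^ (γ - 2)
          = t ^ ((γ - 4) / 2) * (Real.sqrt (c / (2 * (γ - 1))) * t ^ (γ / 2)) := by
            rw [← hte]; ring
        _ ≤ t ^ ((γ - 4) / 2) * Real.sqrt (Q t) :=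
            mul_le_mul_of_nonneg_left hsq (Real.rpow_nonneg htpos.le _)
    have h2 : (∫ l in ρ1..x, Real.sqrt (c / (2 * (γ - 1))) * l ^ (γ - 2))
        ≤ ∫ l in ρ1..x, l ^ ((γ - 4) / 2) * Real.sqrt (Q l) :=
      intervalIntegral.integral_mono_on hx
        ((intervalIntegral.intervalIntegrable_rpow' (by linarith)).const_mul _)
        (hInt ρ1 x hρ1pos hxpos) hptwise
    have hval : (∫ l in ρ1..x, Real.sqrt (c / (2 * (γ - 1))) * l ^ (γ - 2))
        = Real.sqrt (c / (2 * (γ - 1))) * ((x ^ (γ - 1) - ρ1 ^ (γ - 1)) / (γ - 1)) := by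
      rw [intervalIntegral.integral_const_mul, integral_rpow (Or.inl (by linarith)),
        show γ - 2 + 1 = γ - 1 by ring]
    rw [hsplit]
    calc A * Real.sqrt (c / (2 * (γ - 1))) * ((x ^ (γ - 1) - ρ1 ^ (γ - 1)) / (γ - 1))
        = A * (0 + Real.sqrt (c / (2 * (γ - 1))) * ((x ^ (γ - 1) - ρ1 ^ (γ - 1)) / (γ - 1))) := by
          ring
      _ ≤ A * ((∫ l in ρs..ρ1, l ^ ((γ - 4) / 2) * Real.sqrt (Q l))
            + ∫ l in ρ1..x, l ^ ((γ - 4) / 2) * Real.sqrt (Q l)) := by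
          refine mul_le_mul_of_nonneg_left (add_le_add h1 ?_) hA.le
          rw [← hval]; exact h2
  · -- upper bound for small ρ
    intro x hx0 hx
    rw [hG]
    have hsym : (∫ l in ρs..x, l ^ ((γ - 4) / 2) * Real.sqrt (Q l))
        = -∫ l in x..ρs, l ^ ((γ - 4) / 2) * Real.sqrt (Q l) :=
      intervalIntegral.integral_symm x ρs
    have hsplit : (∫ l in x..ρs, l ^ ((γ - 4) / 2) * Real.sqrt (Q l))
        = (∫ l in x..ρ0, l ^ ((γ - 4) / 2) * Real.sqrt (Q l))
          + ∫ l in ρ0..ρs, l ^ ((γ - 4) / 2) * Real.sqrt (Q l) :=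
      (intervalIntegral.integral_add_adjacent_intervals
        (hInt x ρ0 hx0 hρ0pos) (hInt ρ0 ρs hρ0pos hρs)).symm
    have h1 : 0 ≤ ∫ l in ρ0..ρs, l ^ ((γ - 4) / 2) * Real.sqrt (Q l) := hnn _ _ hρ0pos hρ0ρs
    have hρsγ : ρs ^ (γ - 1) * ρs = ρs ^ γ := by
      nth_rewrite 2 [show ρs = ρs ^ (1:ℝ) from (Real.rpow_one ρs).symm]
      rw [← Real.rpow_add hρs]; norm_num
    have hptwise : ∀ t ∈ Set.Icc x ρ0,
        Real.sqrt (c / 2) * ρs ^ (γ / 2) * t ^ ((γ - 4) / 2)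
          ≤ t ^ ((γ - 4) / 2) * Real.sqrt (Q t) := by
      intro t ht
      have htpos : 0 < t := lt_of_lt_of_le hx0 ht.1
      have hQge : c / 2 * ρs ^ γ ≤ Q t := by
        rw [hQ]
        have htρ0 : γ * ρs ^ (γ - 1) * t ≤ (γ - 1) / 2 * ρs ^ γ := by
          have h4 : γ * ρs ^ (γ - 1) * t ≤ γ * ρs ^ (γ - 1) * ρ0 :=
            mul_le_mul_of_nonneg_left ht.2 (by positivity)
          have h5 : γ * ρs ^ (γ - 1) * ρ0 = (γ - 1) / 2 * ρs ^ γ := by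
            rw [hρ0def, ← hρsγ]; field_simp
          linarith [h4, h5.le]
        have htγnn : 0 ≤ t ^ γ := Real.rpow_nonneg htpos.le _
        have hin : (γ - 1) / 2 * ρs ^ γ
            ≤ t ^ γ - γ * ρs ^ (γ - 1) * t + (γ - 1) * ρs ^ γ := by linarith
        calc c / 2 * ρs ^ γ = c / (γ - 1) * ((γ - 1) / 2 * ρs ^ γ) := by
              field_simp
          _ ≤ c / (γ - 1) * (t ^ γ - γ * ρs ^ (γ - 1) * t + (γ - 1) * ρs ^ γ) :=
              mul_le_mul_of_nonneg_left hin (by positivity)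
      have hsqrtpow : Real.sqrt (ρs ^ γ) = ρs ^ (γ / 2) := by
        rw [Real.sqrt_eq_rpow, ← Real.rpow_mul hρs.le, mul_one_div]
      have hsq : Real.sqrt (c / 2) * ρs ^ (γ / 2) ≤ Real.sqrt (Q t) := by
        have := Real.sqrt_le_sqrt hQge
        rwa [Real.sqrt_mul (by positivity), hsqrtpow] at this
      calc Real.sqrt (c / 2) * ρs ^ (γ / 2) * t ^ ((γ - 4) / 2)
          = t ^ ((γ - 4) / 2) * (Real.sqrt (c / 2) * ρs ^ (γ / 2)) := by ring
        _ ≤ t ^ ((γ - 4) / 2) * Real.sqrt (Q t) :=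
            mul_le_mul_of_nonneg_left hsq (Real.rpow_nonneg htpos.le _)
    have h2 : (∫ l in x..ρ0, Real.sqrt (c / 2) * ρs ^ (γ / 2) * l ^ ((γ - 4) / 2))
        ≤ ∫ l in x..ρ0, l ^ ((γ - 4) / 2) * Real.sqrt (Q l) :=
      intervalIntegral.integral_mono_on hx.le
        ((intervalIntegral.intervalIntegrable_rpow
          (Or.inr (Set.notMem_uIcc_of_lt hx0 hρ0pos))).const_mul _)
        (hInt x ρ0 hx0 hρ0pos) hptwise
    have hval : (∫ l in x..ρ0, Real.sqrt (c / 2) * ρs ^ (γ / 2) * l ^ ((γ - 4) / 2))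
        = Real.sqrt (c / 2) * ρs ^ (γ / 2)
            * ((ρ0 ^ ((γ - 2) / 2) - x ^ ((γ - 2) / 2)) / ((γ - 2) / 2)) := by
      rw [intervalIntegral.integral_const_mul,
        integral_rpow (Or.inr ⟨by intro h; rw [div_eq_iff (by norm_num : (2:ℝ) ≠ 0)] at h; linarith,
          Set.notMem_uIcc_of_lt hx0 hρ0pos⟩),
        show (γ - 4) / 2 + 1 = (γ - 2) / 2 by ring]
    rw [hsym, hsplit]
    have hstep : Real.sqrt (c / 2) * ρs ^ (γ / 2)
        * ((ρ0 ^ ((γ - 2) / 2) - x ^ ((γ - 2) / 2)) / ((γ - 2) / 2))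
        ≤ (∫ l in x..ρ0, l ^ ((γ - 4) / 2) * Real.sqrt (Q l))
          + ∫ l in ρ0..ρs, l ^ ((γ - 4) / 2) * Real.sqrt (Q l) := by
      rw [← hval]
      linarith [h2, h1]
    have hfinal : A * -((∫ l in x..ρ0, l ^ ((γ - 4) / 2) * Real.sqrt (Q l))
          + ∫ l in ρ0..ρs, l ^ ((γ - 4) / 2) * Real.sqrt (Q l))
        ≤ A * -(Real.sqrt (c / 2) * ρs ^ (γ / 2)
            * ((ρ0 ^ ((γ - 2) / 2) - x ^ ((γ - 2) / 2)) / ((γ - 2) / 2))) := by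
      refine mul_le_mul_of_nonneg_left (neg_le_neg hstep) hA.le
    have key : ∀ K X R : ℝ, A * -(K * ((R - X) / ((γ - 2) / 2)))
        = -(2 * A / (2 - γ)) * K * (X - R) := by
      intro K X R
      have hd : γ - 2 ≠ 0 := by linarith
      have h2ne : (2:ℝ) - γ ≠ 0 := by linarith
      field_simp
      ring
    have hkey := key (Real.sqrt (c / 2) * ρs ^ (γ / 2)) (x ^ ((γ - 2) / 2)) (ρ0 ^ ((γ - 2) / 2))
    refine le_trans hfinal (le_of_eq ?_)
    calc A * -(Real.sqrt (c / 2) * ρs ^ (γ / 2)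
          * ((ρ0 ^ ((γ - 2) / 2) - x ^ ((γ - 2) / 2)) / ((γ - 2) / 2)))
        = -(2 * A / (2 - γ)) * (Real.sqrt (c / 2) * ρs ^ (γ / 2))
            * (x ^ ((γ - 2) / 2) - ρ0 ^ ((γ - 2) / 2)) := hkey
      _ = -(2 * A / (2 - γ)) * Real.sqrt (c / 2) * ρs ^ (γ / 2)
            * (x ^ ((γ - 2) / 2) - ρ0 ^ ((γ - 2) / 2)) := by ring
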